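/- With the same hypotheses as the accelerated convergence theorem (f convex differentiable, sequences q_t, γ_t, α_t = q_t/(2+q_{t+1})), the Lyapunov function J_t = γ_t q_t (q_t+2)(f(x_t) − f(x*)) + (1/2)‖2(y_t − x*) + q_t(y_t − x_t)‖² is nonincreasing: J_{t+1} ≤ J_t for all t. -/

import Mathlib

open scoped RealInnerProductSpace

lemma grad_ineq {d : ℕ} {f : EuclideanSpace ℝ (Fin d) → ℝ}
    (hconv : ConvexOn ℝ Set.univ f) {g w : EuclideanSpace ℝ (Fin d)}
    (hg : HasGradientAt f g w) (z : EuclideanSpace ℝ (Fin d)) :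
    ⟪g, z - w⟫ ≤ f z - f w := by
  set φ : ℝ → ℝ := fun t => f (t • (z - w) + w) with hφ
  have hφconv : ConvexOn ℝ Set.univ φ := by
    have := hconv.comp_affineMap (AffineMap.lineMap w z)
    simpa [φ, Function.comp_def, AffineMap.lineMap_apply, vadd_eq_add] using this
  have hcurve : HasDerivAt (fun t : ℝ => t • (z - w) + w) (z - w) 0 := by
    simpa using ((hasDerivAt_id (0:ℝ)).smul_const (z - w)).add_const w
  have hF : HasFDerivAt f ((InnerProductSpace.toDual ℝ _) g) w := hg.hasFDerivAt
  have hF' : HasFDerivAt f ((InnerProductSpace.toDual ℝ _) g)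
      ((fun t : ℝ => t • (z - w) + w) 0) := by simpa using hF
  have hder : HasDerivAt φ ⟪g, z - w⟫ 0 := by
    simpa [φ, Function.comp_def, InnerProductSpace.toDual_apply_apply] using
      (hF'.comp_hasDerivAt 0 hcurve)
  have hs := hφconv.le_slope_of_hasDerivAt (Set.mem_univ (0:ℝ)) (Set.mem_univ (1:ℝ))
    one_pos hder
  have : slope φ 0 1 = f z - f w := by
    simp [slope_def_field, φ]
  linarith [hs, this.le, this.ge]

theorem stmt12 {d : ℕ} (f : EuclideanSpace ℝ (Fin d) → ℝ)
    (f' : EuclideanSpace ℝ (Fin d) → EuclideanSpace ℝ (Fin d))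
    (hconv : ConvexOn ℝ Set.univ f)
    (hdiff : ∀ p, HasGradientAt f (f' p) p)
    (xs : EuclideanSpace ℝ (Fin d)) (hmin : ∀ p, f xs ≤ f p)
    (q γ α : ℕ → ℝ)
    (hq0 : q 0 = 0) (hqnonneg : ∀ t, 0 ≤ q t)
    (hqrec : ∀ t, (q (t + 1) + 1) ^ 2 ≤ (q t + 2) ^ 2 + 1)
    (hγpos : ∀ t, 0 < γ t) (hγmono : ∀ t, γ (t + 1) ≤ γ t)
    (hα : ∀ t, α t = q t / (2 + q (t + 1)))
    (x y : ℕ → EuclideanSpace ℝ (Fin d))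
    (hinit : x 0 = y 0)
    (hx : ∀ t, x (t + 1) = y t - γ t • f' (y t))
    (hy : ∀ t, y (t + 1) = x (t + 1) + α t • (x (t + 1) - x t))
    (hdec : ∀ t, f (x (t + 1)) ≤ f (y t) - (γ t / 2) * ‖f' (y t)‖ ^ 2)
    (J : ℕ → ℝ)
    (hJ : ∀ t, J t = γ t * q t * (q t + 2) * (f (x t) - f xs)
        + (1 / 2) * ‖(2 : ℝ) • (y t - xs) + q t • (y t - x t)‖ ^ 2) :
    ∀ t, J (t + 1) ≤ J t := by
  intro t
  rw [hJ (t + 1), hJ t]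
  set g := f' (y t) with hg
  set v : EuclideanSpace ℝ (Fin d) := (2 : ℝ) • (y t - xs) + q t • (y t - x t) with hv
  set v' : EuclideanSpace ℝ (Fin d) :=
    (2 : ℝ) • (y (t + 1) - xs) + q (t + 1) • (y (t + 1) - x (t + 1)) with hv'
  have hqpos : (0:ℝ) < 2 + q (t + 1) := by linarith [hqnonneg (t + 1)]
  have hαq : (2 + q (t + 1)) * α t = q t := by
    rw [hα t]; field_simp
  -- step A : v' = v - ((2 + q t) * γ t) • g
  have hstepA : v' = v - ((2 + q t) * γ t) • g := by
    have h1 : v' = (2 : ℝ) • (x (t + 1) - xs)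
        + ((2 + q (t + 1)) * α t) • (x (t + 1) - x t) := by
      rw [hv', hy t]; module
    rw [h1, hαq, hx t, hv]; module
  have hnorm : ‖v'‖ ^ 2 = ‖v‖ ^ 2 - 2 * ((2 + q t) * γ t) * ⟪g, v⟫
      + ((2 + q t) * γ t) ^ 2 * ‖g‖ ^ 2 := by
    rw [hstepA, norm_sub_sq_real, real_inner_smul_right, norm_smul, Real.norm_eq_abs, mul_pow, sq_abs,
      real_inner_comm]
    ring
  -- gradient inequalities
  have h1 := grad_ineq hconv (hdiff (y t)) xs
  have h2 := grad_ineq hconv (hdiff (y t)) (x t)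
  have hipv : ⟪g, v⟫ = 2 * ⟪g, y t - xs⟫ + q t * ⟪g, y t - x t⟫ := by
    rw [hv, inner_add_right, real_inner_smul_right, real_inner_smul_right]
  have hns : ⟪g, y t - xs⟫ = -⟪g, xs - y t⟫ := by
    rw [← inner_neg_right]; congr 1; abel
  have hnx : ⟪g, y t - x t⟫ = -⟪g, x t - y t⟫ := by
    rw [← inner_neg_right]; congr 1; abel
  have hip : 2 * (f (y t) - f xs) + q t * (f (y t) - f (x t)) ≤ ⟪g, v⟫ := by
    rw [hipv, hns, hnx]
    have hq := hqnonneg t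
    nlinarith [mul_le_mul_of_nonneg_left h2 hq]
  -- scalar bookkeeping
  have hA' : (0:ℝ) ≤ f (x (t + 1)) - f xs := by linarith [hmin (x (t + 1))]
  have hG : (0:ℝ) ≤ ‖g‖ ^ 2 := by positivity
  have hrec := hqrec t
  have hγt := hγpos t
  have hγt' := hγpos (t + 1)
  have hγle := hγmono t
  have hqt := hqnonneg t
  have hqt' := hqnonneg (t + 1)
  have hd := hdec t
  have m2 : q (t + 1) * (q (t + 1) + 2) ≤ (q t + 2) ^ 2 := by nlinarith
  have s1 : γ (t + 1) * (q (t + 1) * (q (t + 1) + 2)) ≤ γ t * (q t + 2) ^ 2 :=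
    mul_le_mul hγle m2 (by positivity) hγt.le
  have s2 : γ (t + 1) * q (t + 1) * (q (t + 1) + 2) * (f (x (t + 1)) - f xs)
      ≤ γ t * (q t + 2) ^ 2 * (f (x (t + 1)) - f xs) := by
    linarith [mul_le_mul_of_nonneg_right s1 hA']
  have s3 : γ t * (q t + 2) ^ 2 * (f (x (t + 1)) - f xs)
      ≤ γ t * (q t + 2) ^ 2 * (f (y t) - f xs - (γ t / 2) * ‖g‖ ^ 2) := by
    have hc : (0:ℝ) ≤ γ t * (q t + 2) ^ 2 := by positivity
    have : f (x (t + 1)) - f xs ≤ f (y t) - f xs - (γ t / 2) * ‖g‖ ^ 2 := by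
      rw [hg]; linarith
    exact mul_le_mul_of_nonneg_left this hc
  have s4 : ((2 + q t) * γ t) * (2 * (f (y t) - f xs) + q t * (f (y t) - f (x t)))
      ≤ ((2 + q t) * γ t) * ⟪g, v⟫ :=
    mul_le_mul_of_nonneg_left hip (by positivity)
  rw [hnorm]
  linarith [s2, s3, s4]
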